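/- Original SLS realization stability: let Φx, Φu satisfy (zI - A)Φx - BΦu = I with associated S_xu = Φx B, S_uu = I + Φu B, and let R_r = [[A + (1-z)I, B, 0],[0, 0, zΦu],[I, 0, I - zΦx]]. Then (I - R_r)·S_r = S_r·(I - R_r) = I where S_r = [[Φx, S_xu, Φx(zI - A) - I],[Φu, S_uu, Φu(zI - A)],[z⁻¹I, z⁻¹B, I - z⁻¹A]]. -/

import Mathlib

set_option synthInstance.maxHeartbeats 1000000
set_option maxHeartbeats 1000000

noncomputable section

/-- A 3×3 block matrix. -/
def blk3 {n m p α : Type*}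
    (M11 : Matrix n n α) (M12 : Matrix n m α) (M13 : Matrix n p α)
    (M21 : Matrix m n α) (M22 : Matrix m m α) (M23 : Matrix m p α)
    (M31 : Matrix p n α) (M32 : Matrix p m α) (M33 : Matrix p p α) :
    Matrix (n ⊕ (m ⊕ p)) (n ⊕ (m ⊕ p)) α :=
  Matrix.fromBlocks M11 (Matrix.fromCols M12 M13) (Matrix.fromRows M21 M31)
    (Matrix.fromBlocks M22 M23 M32 M33)

lemma blk3_ext {n m p α : Type*}
    {M11 N11 : Matrix n n α} {M12 N12 : Matrix n m α} {M13 N13 : Matrix n p α}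
    {M21 N21 : Matrix m n α} {M22 N22 : Matrix m m α} {M23 N23 : Matrix m p α}
    {M31 N31 : Matrix p n α} {M32 N32 : Matrix p m α} {M33 N33 : Matrix p p α}
    (h11 : M11 = N11) (h12 : M12 = N12) (h13 : M13 = N13)
    (h21 : M21 = N21) (h22 : M22 = N22) (h23 : M23 = N23)
    (h31 : M31 = N31) (h32 : M32 = N32) (h33 : M33 = N33) :
    blk3 M11 M12 M13 M21 M22 M23 M31 M32 M33 =
      blk3 N11 N12 N13 N21 N22 N23 N31 N32 N33 := by
  subst h11 h12 h13 h21 h22 h23 h31 h32 h33; rfl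

lemma blk3_mul {n m p α : Type*} [Fintype n] [Fintype m] [Fintype p]
    [NonUnitalNonAssocSemiring α]
    (M11 : Matrix n n α) (M12 : Matrix n m α) (M13 : Matrix n p α)
    (M21 : Matrix m n α) (M22 : Matrix m m α) (M23 : Matrix m p α)
    (M31 : Matrix p n α) (M32 : Matrix p m α) (M33 : Matrix p p α)
    (N11 : Matrix n n α) (N12 : Matrix n m α) (N13 : Matrix n p α)
    (N21 : Matrix m n α) (N22 : Matrix m m α) (N23 : Matrix m p α)
    (N31 : Matrix p n α) (N32 : Matrix p m α) (N33 : Matrix p p α) :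
    blk3 M11 M12 M13 M21 M22 M23 M31 M32 M33 *
      blk3 N11 N12 N13 N21 N22 N23 N31 N32 N33 =
    blk3 (M11*N11 + M12*N21 + M13*N31) (M11*N12 + M12*N22 + M13*N32)
      (M11*N13 + M12*N23 + M13*N33)
      (M21*N11 + M22*N21 + M23*N31) (M21*N12 + M22*N22 + M23*N32)
      (M21*N13 + M22*N23 + M23*N33)
      (M31*N11 + M32*N21 + M33*N31) (M31*N12 + M32*N22 + M33*N32)
      (M31*N13 + M32*N23 + M33*N33) := by
  ext (i | i | i) (j | j | j) <;>
    simp [blk3, Matrix.mul_apply, Fintype.sum_sum_type, Finset.sum_add_distrib] <;>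
    exact (add_assoc _ _ _).symm

lemma blk3_sub {n m p α : Type*} [SubtractionMonoid α]
    (M11 : Matrix n n α) (M12 : Matrix n m α) (M13 : Matrix n p α)
    (M21 : Matrix m n α) (M22 : Matrix m m α) (M23 : Matrix m p α)
    (M31 : Matrix p n α) (M32 : Matrix p m α) (M33 : Matrix p p α)
    (N11 : Matrix n n α) (N12 : Matrix n m α) (N13 : Matrix n p α)
    (N21 : Matrix m n α) (N22 : Matrix m m α) (N23 : Matrix m p α)
    (N31 : Matrix p n α) (N32 : Matrix p m α) (N33 : Matrix p p α) :
    blk3 M11 M12 M13 M21 M22 M23 M31 M32 M33 -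
      blk3 N11 N12 N13 N21 N22 N23 N31 N32 N33 =
    blk3 (M11-N11) (M12-N12) (M13-N13) (M21-N21) (M22-N22) (M23-N23)
      (M31-N31) (M32-N32) (M33-N33) := by
  ext (i | i | i) (j | j | j) <;> simp [blk3]

lemma blk3_one {n m p α : Type*} [DecidableEq n] [DecidableEq m] [DecidableEq p]
    [Zero α] [One α] :
    (1 : Matrix (n ⊕ (m ⊕ p)) (n ⊕ (m ⊕ p)) α) = blk3 1 0 0 0 1 0 0 0 1 := by
  ext (i | i | i) (j | j | j) <;>
    simp [blk3, Matrix.one_apply, Sum.inl.injEq, Sum.inr.injEq]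

/-- Original state-feedback SLS realization stability: if `(zI - A) Φx - B Φu = I`, then the
realization `R_r = [[A + (1-z)I, B, 0],[0, 0, zΦu],[I, 0, I - zΦx]]` (internal state `(x, u, δ)`)
has stability matrix
`S_r = [[Φx, Φx B, Φx(zI - A) - I],[Φu, I + Φu B, Φu(zI - A)],[z⁻¹I, z⁻¹B, I - z⁻¹A]]`, i.e.
`(I - R_r) S_r = S_r (I - R_r) = I`. -/
theorem original_sls_realization {n m : Type*} [Fintype n] [Fintype m]
    [DecidableEq n] [DecidableEq m]
    (A : Matrix n n ℝ) (B : Matrix n m ℝ)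
    (Φx : Matrix n n (RatFunc ℝ)) (Φu : Matrix m n (RatFunc ℝ))
    (haffine : ((RatFunc.X : RatFunc ℝ) • (1 : Matrix n n (RatFunc ℝ))
        - A.map (algebraMap ℝ (RatFunc ℝ))) * Φx
        - (B.map (algebraMap ℝ (RatFunc ℝ))) * Φu = 1)
    (Rr Sr : Matrix (n ⊕ (m ⊕ n)) (n ⊕ (m ⊕ n)) (RatFunc ℝ))
    (hRr : Rr = blk3
      (A.map (algebraMap ℝ (RatFunc ℝ))
        + (1 - (RatFunc.X : RatFunc ℝ)) • (1 : Matrix n n (RatFunc ℝ)))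
      (B.map (algebraMap ℝ (RatFunc ℝ))) 0
      0 0 ((RatFunc.X : RatFunc ℝ) • Φu)
      (1 : Matrix n n (RatFunc ℝ)) 0
      ((1 : Matrix n n (RatFunc ℝ)) - (RatFunc.X : RatFunc ℝ) • Φx))
    (hSr : Sr = blk3
      Φx (Φx * B.map (algebraMap ℝ (RatFunc ℝ)))
      (Φx * ((RatFunc.X : RatFunc ℝ) • (1 : Matrix n n (RatFunc ℝ))
        - A.map (algebraMap ℝ (RatFunc ℝ))) - 1)
      Φu (1 + Φu * B.map (algebraMap ℝ (RatFunc ℝ)))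
      (Φu * ((RatFunc.X : RatFunc ℝ) • (1 : Matrix n n (RatFunc ℝ))
        - A.map (algebraMap ℝ (RatFunc ℝ))))
      ((RatFunc.X : RatFunc ℝ)⁻¹ • (1 : Matrix n n (RatFunc ℝ)))
      ((RatFunc.X : RatFunc ℝ)⁻¹ • B.map (algebraMap ℝ (RatFunc ℝ)))
      ((1 : Matrix n n (RatFunc ℝ))
        - (RatFunc.X : RatFunc ℝ)⁻¹ • A.map (algebraMap ℝ (RatFunc ℝ)))) :
    (1 - Rr) * Sr = 1 ∧ Sr * (1 - Rr) = 1 := by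
  set z : RatFunc ℝ := RatFunc.X with hz
  have hz0 : z ≠ 0 := RatFunc.X_ne_zero
  have hzinv : z⁻¹ * z = 1 := inv_mul_cancel₀ hz0
  have hzinv' : z * z⁻¹ = 1 := mul_inv_cancel₀ hz0
  set Aq := A.map (algebraMap ℝ (RatFunc ℝ)) with hAq
  set Bq := B.map (algebraMap ℝ (RatFunc ℝ)) with hBq
  have hAx : Aq * Φx = z • Φx - Bq * Φu - 1 := by
    have h := haffine
    rw [Matrix.sub_mul, Matrix.smul_mul, Matrix.one_mul] at h
    rw [← h]; abel
  have hAx2 : ∀ Y : Matrix n n (RatFunc ℝ),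
      Y * Aq * Φx = Y * (z • Φx - Bq * Φu - 1) := fun Y => by
    rw [Matrix.mul_assoc, hAx]
  have hAx3 : ∀ Y : Matrix m n (RatFunc ℝ),
      Y * Aq * Φx = Y * (z • Φx - Bq * Φu - 1) := fun Y => by
    rw [Matrix.mul_assoc, hAx]
  have hsub : (1 : Matrix (n ⊕ (m ⊕ n)) (n ⊕ (m ⊕ n)) (RatFunc ℝ)) - Rr =
      blk3 (z • (1 : Matrix n n (RatFunc ℝ)) - Aq) (-Bq) 0
        0 1 (-(z • Φu)) (-1) 0 (z • Φx) := by
    rw [hRr, blk3_one, blk3_sub]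
    refine blk3_ext ?_ ?_ ?_ ?_ ?_ ?_ ?_ ?_ ?_ <;> (try rw [sub_smul, one_smul]) <;> abel
  constructor <;>
  · rw [hsub, hSr, blk3_mul]
    conv_rhs => rw [blk3_one]
    refine blk3_ext ?_ ?_ ?_ ?_ ?_ ?_ ?_ ?_ ?_ <;>
    · simp only [Matrix.neg_mul, Matrix.mul_neg, Matrix.zero_mul, Matrix.mul_zero,
        Matrix.one_mul, Matrix.mul_one, Matrix.sub_mul, Matrix.mul_sub,
        Matrix.add_mul, Matrix.mul_add, Matrix.smul_mul, Matrix.mul_smul,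
        smul_sub, smul_add, smul_neg, smul_zero, neg_neg, neg_add, neg_sub, neg_zero,
        smul_smul, hzinv, hzinv', one_smul, ← Matrix.mul_assoc,
        hAx, hAx2, hAx3]
      abel
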